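/- Let θ : H₁ → H₂ be a surjective good homomorphism of commutative multiplicative hyperrings and P₁ a strong C-hyperideal of H₁ with ker(θ) ⊆ P₁. If P₁ is an sdf-absorbing hyperideal of H₁, then θ(P₁) is an sdf-absorbing hyperideal of H₂. -/

import Mathlib

open Pointwise

/-- A commutative multiplicative hyperring structure on an abelian group `H`. -/
structure MulHyperring (H : Type*) [AddCommGroup H] where
  hmul : H → H → Set H
  hmul_nonempty : ∀ x y : H, (hmul x y).Nonempty
  hmul_comm : ∀ x y : H, hmul x y = hmul y x
  hmul_assoc : ∀ x y z : H, (⋃ a ∈ hmul y z, hmul x a) = ⋃ b ∈ hmul x y, hmul b z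
  hmul_distrib : ∀ x y z : H, hmul x (y + z) ⊆ hmul x y + hmul x z
  hmul_neg : ∀ x y : H, hmul x (-y) = -(hmul x y)

namespace Hyper

variable {H : Type*} [AddCommGroup H] (mul : H → H → Set H)

/-- `P` is a hyperideal. -/
def IsIdeal (P : Set H) : Prop :=
  (0 : H) ∈ P ∧ (∀ x ∈ P, ∀ y ∈ P, x - y ∈ P) ∧ ∀ r : H, ∀ x ∈ P, mul r x ⊆ P

/-- Hyperproduct `a ∘ b₁ ∘ ⋯ ∘ bₙ`. -/
def hprod : H → List H → Set H
  | a, [] => {a}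
  | a, b :: l => ⋃ t ∈ mul a b, hprod t l

/-- `C` is a finite hyperproduct `c₁ ∘ ⋯ ∘ cₙ`. -/
def IsProduct (C : Set H) : Prop := ∃ (a : H) (l : List H), C = hprod mul a l

/-- `D` is a finite (nonempty) sum of finite hyperproducts. -/
def IsSum (D : Set H) : Prop :=
  ∃ L : List (Set H), L ≠ [] ∧ (∀ C ∈ L, IsProduct mul C) ∧ D = L.sum

/-- `P` is a `𝒞`-hyperideal. -/
def IsCIdeal (P : Set H) : Prop :=
  IsIdeal mul P ∧ ∀ C : Set H, IsProduct mul C → (C ∩ P).Nonempty → C ⊆ P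

/-- `P` is a strong `𝒞`-hyperideal. -/
def IsStrongCIdeal (P : Set H) : Prop :=
  IsIdeal mul P ∧ ∀ D : Set H, IsSum mul D → (D ∩ P).Nonempty → D ⊆ P

/-- The hypersquare `x² = x ∘ x`. -/
def sq (x : H) : Set H := mul x x

/-- `P` is an sdf-absorbing hyperideal. -/
def IsSdf (P : Set H) : Prop :=
  IsIdeal mul P ∧ P ≠ Set.univ ∧
    ∀ x y : H, x ≠ 0 → y ≠ 0 → sq mul x - sq mul y ⊆ P → x - y ∈ P ∨ x + y ∈ P

/-- `P` is a weakly sdf-absorbing hyperideal. -/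
def IsWeaklySdf (P : Set H) : Prop :=
  IsIdeal mul P ∧ P ≠ Set.univ ∧
    ∀ x y : H, x ≠ 0 → y ≠ 0 → (0 : H) ∉ sq mul x - sq mul y →
      sq mul x - sq mul y ⊆ P → x - y ∈ P ∨ x + y ∈ P

/-- `P` is a prime hyperideal. -/
def IsPrime (P : Set H) : Prop :=
  IsIdeal mul P ∧ P ≠ Set.univ ∧ ∀ x y : H, mul x y ⊆ P → x ∈ P ∨ y ∈ P

/-- The radical: intersection of the prime hyperideals containing `P`. -/
def rad (P : Set H) : Set H := ⋂₀ {Q : Set H | IsPrime mul Q ∧ P ⊆ Q}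

/-- `hpow mul x n` is the hyperpower `x^(n+1)`. -/
def hpow (x : H) (n : ℕ) : Set H := hprod mul x (List.replicate n x)

/-- `x` is nilpotent: `0 ∈ xⁿ` for some `n`. -/
def IsNilpotent (x : H) : Prop := ∃ n : ℕ, (0 : H) ∈ hpow mul x n

/-- `x` is a regular element: `x ∈ x² ∘ y` for some `y`. -/
def IsRegularElem (x : H) : Prop := ∃ y : H, x ∈ ⋃ t ∈ sq mul x, mul t y

/-- The hyperideal generated by a set `S`. -/
def span (S : Set H) : Set H := ⋂₀ {Q : Set H | IsIdeal mul Q ∧ S ⊆ Q}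

/-- `P` is a maximal hyperideal. -/
def IsMaximal (P : Set H) : Prop :=
  IsIdeal mul P ∧ P ≠ Set.univ ∧
    ∀ B : Set H, IsIdeal mul B → P ⊆ B → B = P ∨ B = Set.univ

end Hyper

/-- Componentwise hypermultiplication on a product. -/
def prodMul {H₁ H₂ : Type*} (m₁ : H₁ → H₁ → Set H₁) (m₂ : H₂ → H₂ → Set H₂) :
    H₁ × H₂ → H₁ × H₂ → Set (H₁ × H₂) :=
  fun a b => (m₁ a.1 b.1) ×ˢ (m₂ a.2 b.2)

/-- the image of an sdf-absorbing strong `𝒞`-hyperideal containing the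
kernel, under a surjective good homomorphism, is sdf-absorbing. -/
theorem stmt9 {H₁ H₂ : Type*} [AddCommGroup H₁] [AddCommGroup H₂]
    (M₁ : MulHyperring H₁) (M₂ : MulHyperring H₂) (θ : H₁ → H₂)
    (hadd : ∀ x y : H₁, θ (x + y) = θ x + θ y)
    (hmul : ∀ x y : H₁, θ '' M₁.hmul x y = M₂.hmul (θ x) (θ y))
    (hsurj : Function.Surjective θ)
    (P₁ : Set H₁) (hS : Hyper.IsStrongCIdeal M₁.hmul P₁)
    (hker : ∀ x : H₁, θ x = 0 → x ∈ P₁)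
    (hsdf : Hyper.IsSdf M₁.hmul P₁) :
    Hyper.IsSdf M₂.hmul (θ '' P₁) := by
  obtain ⟨hid, hne, hsdf3⟩ := hsdf
  have h0 : θ 0 = 0 := by
    have h := hadd 0 0
    rw [add_zero] at h
    exact left_eq_add.mp h
  have hneg : ∀ x : H₁, θ (-x) = -θ x := by
    intro x
    have h := hadd x (-x)
    rw [add_neg_cancel, h0] at h
    exact eq_neg_of_add_eq_zero_right h.symm
  have hsub : ∀ x y : H₁, θ (x - y) = θ x - θ y := by
    intro x y
    rw [sub_eq_add_neg, hadd, hneg, sub_eq_add_neg]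
  have hpreim : ∀ t : H₁, θ t ∈ θ '' P₁ → t ∈ P₁ := by
    intro t ht
    obtain ⟨p, hp, hpt⟩ := ht
    have h1 : t - p ∈ P₁ := hker _ (by rw [hsub, hpt, sub_self])
    have h2 : -p ∈ P₁ := by
      have := hid.2.1 0 hid.1 p hp
      rwa [zero_sub] at this
    have := hid.2.1 (t - p) h1 (-p) h2
    rwa [sub_neg_eq_add, sub_add_cancel] at this
  refine ⟨⟨⟨0, hid.1, h0⟩, ?_, ?_⟩, ?_, ?_⟩
  · rintro _ ⟨p, hp, rfl⟩ _ ⟨q, hq, rfl⟩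
    exact ⟨p - q, hid.2.1 p hp q hq, hsub p q⟩
  · rintro r _ ⟨p, hp, rfl⟩
    obtain ⟨s, rfl⟩ := hsurj r
    rw [← hmul]
    exact Set.image_mono (hid.2.2 s p hp)
  · intro h
    apply hne
    rw [Set.eq_univ_iff_forall]
    intro t
    exact hpreim t (by rw [h]; trivial)
  · intro x y hx hy hsq
    obtain ⟨a, rfl⟩ := hsurj x
    obtain ⟨b, rfl⟩ := hsurj y
    have ha : a ≠ 0 := fun h => hx (by rw [h, h0])
    have hb : b ≠ 0 := fun h => hy (by rw [h, h0])
    have key : Hyper.sq M₁.hmul a - Hyper.sq M₁.hmul b ⊆ P₁ := by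
      intro t ht
      rw [Set.mem_sub] at ht
      obtain ⟨u, hu, v, hv, rfl⟩ := ht
      apply hpreim
      apply hsq
      rw [Set.mem_sub]
      refine ⟨θ u, ?_, θ v, ?_, (hsub u v).symm⟩
      · rw [Hyper.sq, ← hmul]; exact ⟨u, hu, rfl⟩
      · rw [Hyper.sq, ← hmul]; exact ⟨v, hv, rfl⟩
    rcases hsdf3 a b ha hb key with h | h
    · exact Or.inl ⟨a - b, h, hsub a b⟩
    · exact Or.inr ⟨a + b, h, hadd a b⟩
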